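/- Let n ≥ 3 and s = (n-1)/2. For x, y ∈ S^{n-1} with x ≠ y, let K_{-s}(x·y) = (4/(n-2))^{s-1/2} (Γ(s+1/2)/Γ(2s)) ∫_0^∞ e^{-t(n-2)/2} (P_{e^{-t}}(x·y) − 1/ω_{n-1}) I_{s-1/2}((n-2)t/2) t^{s-1/2} dt. Then there exists a constant c depending only on n such that |K_{-s}(x·y)| ≤ c ln(1 + (1 − x·y)^{-n/2}) for all x, y ∈ S^{n-1} with x ≠ y. -/

import Mathlib

open MeasureTheory

/-- The surface area `ω_{n-1} = 2π^{n/2}/Γ(n/2)` of the unit sphere `S^{n-1} ⊂ ℝ^n`. -/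
noncomputable def omegaSphere (n : ℕ) : ℝ :=
  2 * Real.pi ^ ((n : ℝ) / 2) / Real.Gamma ((n : ℝ) / 2)

/-- The Poisson kernel for the unit ball in `ℝ^n`:
`P_r(τ) = (1 - r²)/(ω_{n-1}(1 - 2rτ + r²)^{n/2})`. -/
noncomputable def spherePoissonKernel (n : ℕ) (r τ : ℝ) : ℝ :=
  (1 - r ^ 2) / (omegaSphere n * (1 - 2 * r * τ + r ^ 2) ^ ((n : ℝ) / 2))

/-- The modified Bessel function of the first kind,
`I_ρ(z) = ∑_{m=0}^∞ (z/2)^(2m+ρ)/(Γ(m+1)Γ(m+ρ+1))`. -/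
noncomputable def besselI (ρ z : ℝ) : ℝ :=
  ∑' m : ℕ, (z / 2) ^ (2 * (m : ℝ) + ρ) /
    (Real.Gamma ((m : ℝ) + 1) * Real.Gamma ((m : ℝ) + ρ + 1))

open Set

lemma fact_sq (m : ℕ) : (2 * m).factorial ≤ 4 ^ m * m.factorial ^ 2 := by
  induction m with
  | zero => simp
  | succ k ih =>
    have h1 : 2 * (k + 1) = 2 * k + 1 + 1 := by ring
    rw [h1, Nat.factorial_succ, Nat.factorial_succ]
    calc (2 * k + 1 + 1) * ((2 * k + 1) * (2 * k).factorial)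
        ≤ (2 * (k+1)) * ((2 * (k+1)) * (4 ^ k * k.factorial ^ 2)) := by
          have h2 : 2 * k + 1 + 1 ≤ 2 * (k + 1) := by omega
          have h3 : 2 * k + 1 ≤ 2 * (k + 1) := by omega
          exact Nat.mul_le_mul h2 (Nat.mul_le_mul h3 ih)
      _ = 4 ^ (k+1) * ((k+1) * k.factorial) ^ 2 := by ring

lemma gamma_fact {ρ : ℝ} (hρ : 0 ≤ ρ) (m : ℕ) :
    (m.factorial : ℝ) * Real.Gamma (ρ + 1) ≤ Real.Gamma ((m : ℝ) + ρ + 1) := by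
  induction m with
  | zero => simp
  | succ k ih =>
    have hpos : 0 < (k : ℝ) + ρ + 1 := by positivity
    have h1 : ((k : ℕ) + 1 : ℕ) = k + 1 := rfl
    have key : Real.Gamma (((k : ℝ) + 1) + ρ + 1) = ((k : ℝ) + ρ + 1) * Real.Gamma ((k : ℝ) + ρ + 1) := by
      have : ((k : ℝ) + 1) + ρ + 1 = ((k : ℝ) + ρ + 1) + 1 := by ring
      rw [this, Real.Gamma_add_one (by positivity)]
    rw [Nat.factorial_succ]
    push_cast
    rw [key]
    have hg := Real.Gamma_pos_of_pos (show (0:ℝ) < ρ + 1 by linarith)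
    have hf : (0:ℝ) < (k.factorial : ℝ) := by exact_mod_cast k.factorial_pos
    nlinarith [mul_le_mul_of_nonneg_left ih (show (0:ℝ) ≤ (k:ℝ) + ρ + 1 by positivity), mul_nonneg (mul_nonneg hρ hf.le) hg.le]

lemma exp_tsum (z : ℝ) : ∑' k : ℕ, z ^ k / (k.factorial : ℝ) = Real.exp z := by
  rw [Real.exp_eq_exp_ℝ, NormedSpace.exp_eq_tsum_div]

lemma omega_pos {n : ℕ} (hn : 1 ≤ n) : 0 < omegaSphere n := by
  have h1 : (0:ℝ) < Real.Gamma ((n : ℝ)/2) := Real.Gamma_pos_of_pos (by positivity)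
  have h2 : (0:ℝ) < Real.pi ^ ((n : ℝ)/2) := Real.rpow_pos_of_pos Real.pi_pos _
  unfold omegaSphere
  positivity

lemma rpow_half_nat {d : ℝ} (hd : 0 ≤ d) (n : ℕ) :
    d ^ ((n:ℝ)/2) = (Real.sqrt d) ^ n := by
  rw [show ((n:ℝ)/2) = (1/2) * (n:ℝ) by ring, Real.rpow_mul hd, Real.rpow_natCast,
    ← Real.sqrt_eq_rpow]

lemma abs_sqrt_sub_one {d : ℝ} (hd : 0 ≤ d) : |Real.sqrt d - 1| ≤ |d - 1| := by
  have h0 : 0 ≤ Real.sqrt d := Real.sqrt_nonneg d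
  have hsq : Real.sqrt d ^ 2 = d := Real.sq_sqrt hd
  rcases le_total (Real.sqrt d) 1 with h | h
  · rw [abs_of_nonpos (by linarith), abs_of_nonpos (by nlinarith)]
    nlinarith
  · rw [abs_of_nonneg (by linarith), abs_of_nonneg (by nlinarith)]
    nlinarith

lemma abs_pow_sub_one {x : ℝ} (hx0 : 0 ≤ x) (hx2 : x ≤ 2) (n : ℕ) :
    |x ^ n - 1| ≤ 2 ^ n * |x - 1| := by
  have h1 : (∑ i ∈ Finset.range n, x ^ i) * (x - 1) = x ^ n - 1 := geom_sum_mul x n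
  rw [← h1, abs_mul]
  apply mul_le_mul_of_nonneg_right _ (abs_nonneg _)
  calc |∑ i ∈ Finset.range n, x ^ i| ≤ ∑ i ∈ Finset.range n, |x ^ i| :=
        Finset.abs_sum_le_sum_abs _ _
    _ ≤ ∑ i ∈ Finset.range n, (2:ℝ) ^ i := by
        apply Finset.sum_le_sum
        intro i _
        rw [abs_pow, abs_of_nonneg hx0]
        exact pow_le_pow_left₀ hx0 hx2 i
    _ ≤ 2 ^ n := by
        have hg : ∀ m : ℕ, ∑ i ∈ Finset.range m, (2:ℝ) ^ i = 2 ^ m - 1 := by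
          intro m
          induction m with
          | zero => simp
          | succ k ih => rw [Finset.sum_range_succ, ih]; ring
        rw [hg n]; linarith

lemma poisson_far {n : ℕ} (hn : 3 ≤ n) {r τ : ℝ} (hr0 : 0 < r) (hr : r ≤ 1/2)
    (hτ : |τ| ≤ 1) :
    |spherePoissonKernel n r τ - 1/omegaSphere n|
      ≤ (2 ^ n * (1 + 3 * 2 ^ n) / omegaSphere n) * r := by
  have hω : 0 < omegaSphere n := omega_pos (by omega)
  have hτ1 : -1 ≤ τ := (abs_le.mp hτ).1
  have hτ2 : τ ≤ 1 := (abs_le.mp hτ).2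
  set d : ℝ := 1 - 2 * r * τ + r ^ 2 with hd
  have hd14 : 1/4 ≤ d := by nlinarith
  have hd4 : d ≤ 4 := by nlinarith
  have hd0 : 0 < d := by linarith
  have hs2 : Real.sqrt d ≤ 2 := by
    rw [show (2:ℝ) = Real.sqrt 4 by rw [show (4:ℝ) = 2^2 by norm_num, Real.sqrt_sq]; norm_num]
    exact Real.sqrt_le_sqrt hd4
  have hs1 : 1/2 ≤ Real.sqrt d := by
    rw [show (1/2:ℝ) = Real.sqrt (1/4) by
      rw [show (1/4:ℝ) = (1/2)^2 by norm_num, Real.sqrt_sq]; norm_num]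
    exact Real.sqrt_le_sqrt hd14
  have habs : |d - 1| ≤ 3 * r := by
    rw [hd, abs_le]
    constructor <;> nlinarith
  have hDpow : |(Real.sqrt d) ^ n - 1| ≤ 2 ^ n * (3 * r) := by
    calc |(Real.sqrt d) ^ n - 1| ≤ 2 ^ n * |Real.sqrt d - 1| :=
          abs_pow_sub_one (Real.sqrt_nonneg d) hs2 n
      _ ≤ 2 ^ n * |d - 1| := by
          apply mul_le_mul_of_nonneg_left (abs_sqrt_sub_one hd0.le) (by positivity)
      _ ≤ 2 ^ n * (3 * r) := mul_le_mul_of_nonneg_left habs (by positivity)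
  have hDlow : (1/2:ℝ) ^ n ≤ (Real.sqrt d) ^ n :=
    pow_le_pow_left₀ (by norm_num) hs1 n
  have hDpos : (0:ℝ) < (Real.sqrt d) ^ n := lt_of_lt_of_le (by positivity) hDlow
  have hP : spherePoissonKernel n r τ - 1/omegaSphere n
      = (1 - r ^ 2 - (Real.sqrt d) ^ n) / (omegaSphere n * (Real.sqrt d) ^ n) := by
    rw [spherePoissonKernel, rpow_half_nat hd0.le]
    field_simp
  rw [hP, abs_div, abs_of_pos (mul_pos hω hDpos)]
  have hnum : |1 - r ^ 2 - (Real.sqrt d) ^ n| ≤ (1 + 3 * 2 ^ n) * r := by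
    calc |1 - r ^ 2 - (Real.sqrt d) ^ n| = |(-(r^2)) + (1 - (Real.sqrt d) ^ n)| := by ring_nf
      _ ≤ |(-(r^2))| + |1 - (Real.sqrt d) ^ n| := abs_add_le _ _
      _ = r^2 + |(Real.sqrt d) ^ n - 1| := by rw [abs_neg, abs_sub_comm, abs_of_nonneg (by positivity)]
      _ ≤ r * 1 + 2 ^ n * (3 * r) := by
          have : r ^ 2 ≤ r * 1 := by nlinarith
          linarith [hDpow]
      _ = (1 + 3 * 2 ^ n) * r := by ring
  calc |1 - r ^ 2 - (Real.sqrt d) ^ n| / (omegaSphere n * (Real.sqrt d) ^ n)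
      ≤ ((1 + 3 * 2 ^ n) * r) / (omegaSphere n * (1/2) ^ n) := by
        apply div_le_div₀ (by positivity) hnum (by positivity)
        exact mul_le_mul_of_nonneg_left hDlow hω.le
    _ = (2 ^ n * (1 + 3 * 2 ^ n) / omegaSphere n) * r := by
        rw [div_pow]
        field_simp
        ring

lemma besselI_nonneg {ρ z : ℝ} (hρ : 0 ≤ ρ) (hz : 0 < z) : 0 ≤ besselI ρ z := by
  apply tsum_nonneg
  intro m
  have h1 : (0:ℝ) ≤ (z/2) ^ (2 * (m:ℝ) + ρ) := Real.rpow_nonneg (by linarith) _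
  have h2 : (0:ℝ) < Real.Gamma ((m:ℝ) + 1) := Real.Gamma_pos_of_pos (by positivity)
  have h3 : (0:ℝ) < Real.Gamma ((m:ℝ) + ρ + 1) := Real.Gamma_pos_of_pos (by positivity)
  positivity

lemma besselI_le {ρ z : ℝ} (hρ : 0 ≤ ρ) (hz : 0 < z) :
    besselI ρ z ≤ (z/2) ^ ρ * Real.exp z / Real.Gamma (ρ + 1) := by
  have hG : (0:ℝ) < Real.Gamma (ρ + 1) := Real.Gamma_pos_of_pos (by linarith)
  have hz2 : (0:ℝ) < z/2 := by linarith
  set c : ℝ := (z/2) ^ ρ / Real.Gamma (ρ + 1) with hc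
  have hc0 : 0 ≤ c := by positivity
  -- the dominating sequence
  set b : ℕ → ℝ := fun m => c * (z ^ (2*m) / ((2*m).factorial : ℝ)) with hb
  have hsumexp : Summable (fun k : ℕ => z ^ k / (k.factorial : ℝ)) :=
    Real.summable_pow_div_factorial z
  have hinj : Function.Injective (fun m : ℕ => 2*m) := fun a b h => by simpa using h
  have hsumb : Summable b := by
    have := (hsumexp.comp_injective hinj).mul_left c
    simpa [hb, Function.comp] using this
  have hterm : ∀ m : ℕ, (z / 2) ^ (2 * (m : ℝ) + ρ) /
      (Real.Gamma ((m : ℝ) + 1) * Real.Gamma ((m : ℝ) + ρ + 1)) ≤ b m := by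
    intro m
    have e1 : (z / 2) ^ (2 * (m : ℝ) + ρ) = (z/2) ^ (2*m) * (z/2) ^ ρ := by
      rw [Real.rpow_add hz2]
      congr 1
      rw [show (2 * (m:ℝ)) = ((2*m : ℕ) : ℝ) by push_cast; ring, Real.rpow_natCast]
    have e2 : Real.Gamma ((m : ℝ) + 1) = (m.factorial : ℝ) := by
      exact_mod_cast Real.Gamma_nat_eq_factorial m
    have hfle : (m.factorial : ℝ) * Real.Gamma (ρ + 1) ≤ Real.Gamma ((m : ℝ) + ρ + 1) :=
      gamma_fact hρ m
    have hfpos : (0:ℝ) < (m.factorial : ℝ) := by exact_mod_cast m.factorial_pos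
    have hGm : (0:ℝ) < Real.Gamma ((m:ℝ) + ρ + 1) := Real.Gamma_pos_of_pos (by positivity)
    rw [e1, e2]
    have hWpos : (0:ℝ) < ((2*m).factorial : ℝ) := by exact_mod_cast (2*m).factorial_pos
    have h4 : ((2*m).factorial : ℝ) ≤ (4:ℝ)^m * (m.factorial:ℝ)^2 := by
      exact_mod_cast fact_sq m
    have e3 : (z/2)^(2*m) * (4:ℝ)^m = z^(2*m) := by
      have : (4:ℝ)^m = 2^(2*m) := by rw [show (4:ℝ) = 2^2 by norm_num, ← pow_mul]
      rw [this, ← mul_pow]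
      norm_num
    have hzp : (0:ℝ) ≤ (z/2)^ρ := Real.rpow_nonneg (by linarith) _
    have hz2m : (0:ℝ) ≤ (z/2)^(2*m) := by positivity
    simp only [hb, hc]
    rw [div_mul_div_comm, div_le_div_iff₀ (by positivity) (by positivity)]
    calc (z/2)^(2*m) * (z/2)^ρ * (Real.Gamma (ρ+1) * ((2*m).factorial : ℝ))
        ≤ (z/2)^(2*m) * (z/2)^ρ * (Real.Gamma (ρ+1) * ((4:ℝ)^m * (m.factorial:ℝ)^2)) := by
          apply mul_le_mul_of_nonneg_left (mul_le_mul_of_nonneg_left h4 hG.le) (by positivity)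
      _ = ((z/2)^(2*m) * (4:ℝ)^m) * ((z/2)^ρ * ((m.factorial:ℝ) * ((m.factorial:ℝ) * Real.Gamma (ρ+1)))) := by
          ring
      _ ≤ z^(2*m) * ((z/2)^ρ * ((m.factorial:ℝ) * Real.Gamma ((m:ℝ) + ρ + 1))) := by
          rw [e3]
          apply mul_le_mul_of_nonneg_left _ (by positivity)
          apply mul_le_mul_of_nonneg_left _ hzp
          exact mul_le_mul_of_nonneg_left hfle hfpos.le
      _ = (z/2)^ρ * z^(2*m) * ((m.factorial:ℝ) * Real.Gamma ((m:ℝ) + ρ + 1)) := by ring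
  -- now sum up
  have hsuma : Summable (fun m : ℕ => (z / 2) ^ (2 * (m : ℝ) + ρ) /
      (Real.Gamma ((m : ℝ) + 1) * Real.Gamma ((m : ℝ) + ρ + 1))) := by
    apply Summable.of_nonneg_of_le _ hterm hsumb
    intro m
    have h1 : (0:ℝ) ≤ (z/2) ^ (2 * (m:ℝ) + ρ) := Real.rpow_nonneg (by linarith) _
    have h2 : (0:ℝ) < Real.Gamma ((m:ℝ) + 1) := Real.Gamma_pos_of_pos (by positivity)
    have h3 : (0:ℝ) < Real.Gamma ((m:ℝ) + ρ + 1) := Real.Gamma_pos_of_pos (by positivity)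
    positivity
  have h1 : besselI ρ z ≤ ∑' m, b m := Summable.tsum_le_tsum hterm hsuma hsumb
  have h2 : ∑' m, b m ≤ c * Real.exp z := by
    rw [hb, tsum_mul_left]
    apply mul_le_mul_of_nonneg_left _ hc0
    rw [← exp_tsum z]
    apply Summable.tsum_le_tsum_of_inj (fun m : ℕ => 2*m) hinj
    · intro k _
      positivity
    · intro m
      exact le_refl _
    · exact hsumexp.comp_injective hinj
    · exact hsumexp
  calc besselI ρ z ≤ c * Real.exp z := h1.trans h2
    _ = (z/2) ^ ρ * Real.exp z / Real.Gamma (ρ + 1) := by rw [hc]; ring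

lemma poisson_near {n : ℕ} (hn : 3 ≤ n) {t τ : ℝ} (ht0 : 0 < t) (ht1 : t ≤ 1)
    (hτl : -1 ≤ τ) (hτu : τ < 1) :
    t ^ (n - 2 : ℕ) * spherePoissonKernel n (Real.exp (-t)) τ
      ≤ 2 ^ (n+1) * Real.sqrt 2 / (omegaSphere n * (t + Real.sqrt (1 - τ))) := by
  obtain ⟨m, rfl⟩ : ∃ m, n = m + 3 := ⟨n - 3, by omega⟩
  have hω : 0 < omegaSphere (m+3) := omega_pos (by omega)
  set r : ℝ := Real.exp (-t) with hrdef
  set u : ℝ := 1 - τ with hu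
  have hu0 : 0 < u := by simp [hu]; linarith
  have hr0 : 0 < r := Real.exp_pos _
  have hr1 : r < 1 := Real.exp_lt_one_iff.mpr (by linarith)
  have hr3 : 1/3 ≤ r := by
    have h1 : Real.exp (-1) ≤ r := Real.exp_le_exp.mpr (by linarith)
    have h2 : Real.exp 1 < 3 := lt_trans Real.exp_one_lt_d9 (by norm_num)
    have h3 : (1/3:ℝ) ≤ Real.exp (-1) := by
      rw [Real.exp_neg, show (1/3:ℝ) = (3:ℝ)⁻¹ by norm_num]
      exact inv_anti₀ (Real.exp_pos 1) h2.le
    linarith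
  have h1r_up : 1 - r ≤ t := by
    have := Real.add_one_le_exp (-t)
    simp only [hrdef]; linarith
  have h1r_low : t/2 ≤ 1 - r := by
    have h1 : t + 1 ≤ Real.exp t := Real.add_one_le_exp t
    have h2 : r * Real.exp t = 1 := by
      rw [hrdef, ← Real.exp_add]; simp
    nlinarith
  set v : ℝ := t^2 + u with hv
  have hv0 : 0 < v := by positivity
  set d : ℝ := 1 - 2 * r * τ + r ^ 2 with hd
  have hd_low : v/4 ≤ d := by
    have he : d = (1-r)^2 + 2*r*u := by rw [hd, hu]; ring
    nlinarith
  have hd0 : 0 < d := by linarith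
  have hsv0 : 0 < Real.sqrt v := Real.sqrt_pos.mpr hv0
  have hsd_low : Real.sqrt v / 2 ≤ Real.sqrt d := by
    rw [show Real.sqrt v / 2 = Real.sqrt (v/4) by
      rw [show v/4 = v * (1/2)^2 by ring, Real.sqrt_mul hv0.le, Real.sqrt_sq (by norm_num)]; ring]
    exact Real.sqrt_le_sqrt hd_low
  have hW_low : (Real.sqrt v)^(m+3) / 2^(m+3) ≤ (Real.sqrt d)^(m+3) := by
    calc (Real.sqrt v)^(m+3) / 2^(m+3) = (Real.sqrt v / 2)^(m+3) := by rw [div_pow]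
      _ ≤ (Real.sqrt d)^(m+3) := pow_le_pow_left₀ (by positivity) hsd_low _
  have hnum : 1 - r^2 ≤ 2 * t := by nlinarith
  have hP : spherePoissonKernel (m+3) r τ = (1 - r^2) / (omegaSphere (m+3) * (Real.sqrt d)^(m+3)) := by
    rw [spherePoissonKernel, rpow_half_nat hd0.le]
  have hsd0 : 0 < (Real.sqrt d)^(m+3) := pow_pos (Real.sqrt_pos.mpr hd0) _
  have htv : t ≤ Real.sqrt v := by
    rw [show t = Real.sqrt (t^2) by rw [Real.sqrt_sq ht0.le]]
    exact Real.sqrt_le_sqrt (by linarith)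
  have hA : 0 < t + Real.sqrt u := by positivity
  have hAv : t + Real.sqrt u ≤ Real.sqrt 2 * Real.sqrt v := by
    rw [← Real.sqrt_mul (by norm_num)]
    rw [show t + Real.sqrt u = Real.sqrt ((t + Real.sqrt u)^2) by
      rw [Real.sqrt_sq hA.le]]
    apply Real.sqrt_le_sqrt
    have hsu : (Real.sqrt u)^2 = u := Real.sq_sqrt hu0.le
    nlinarith [sq_nonneg (t - Real.sqrt u)]
  -- main chain
  have step1 : t ^ (m+1) * spherePoissonKernel (m+3) r τ
      ≤ 2^(m+4) * t^(m+2) / (omegaSphere (m+3) * (Real.sqrt v)^(m+3)) := by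
    rw [hP]
    calc t ^ (m+1) * ((1 - r^2) / (omegaSphere (m+3) * (Real.sqrt d)^(m+3)))
        ≤ t ^ (m+1) * ((2*t) / (omegaSphere (m+3) * ((Real.sqrt v)^(m+3)/2^(m+3)))) := by
          apply mul_le_mul_of_nonneg_left _ (by positivity)
          apply div_le_div₀ (by positivity) hnum (by positivity)
          exact mul_le_mul_of_nonneg_left hW_low hω.le
      _ = 2^(m+4) * t^(m+2) / (omegaSphere (m+3) * (Real.sqrt v)^(m+3)) := by
          field_simp
          ring
  have step2 : 2^(m+4) * t^(m+2) / (omegaSphere (m+3) * (Real.sqrt v)^(m+3))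
      ≤ 2 ^ (m+4) * Real.sqrt 2 / (omegaSphere (m+3) * (t + Real.sqrt u)) := by
    have htpow : t^(m+2) ≤ (Real.sqrt v)^(m+2) := pow_le_pow_left₀ ht0.le htv _
    calc 2^(m+4) * t^(m+2) / (omegaSphere (m+3) * (Real.sqrt v)^(m+3))
        ≤ 2^(m+4) * (Real.sqrt v)^(m+2) / (omegaSphere (m+3) * (Real.sqrt v)^(m+3)) := by
          gcongr
      _ = 2^(m+4) / (omegaSphere (m+3) * Real.sqrt v) := by
          rw [pow_succ]
          field_simp
          ring
      _ ≤ 2 ^ (m+4) * Real.sqrt 2 / (omegaSphere (m+3) * (t + Real.sqrt u)) := by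
          rw [div_le_div_iff₀ (by positivity) (by positivity)]
          calc 2^(m+4) * (omegaSphere (m+3) * (t + Real.sqrt u))
              ≤ 2^(m+4) * (omegaSphere (m+3) * (Real.sqrt 2 * Real.sqrt v)) := by
                apply mul_le_mul_of_nonneg_left (mul_le_mul_of_nonneg_left hAv hω.le) (by positivity)
            _ = 2 ^ (m+4) * Real.sqrt 2 * (omegaSphere (m+3) * Real.sqrt v) := by ring
  rw [show (m+3) - 2 = m+1 from by omega, show (m+3) + 1 = m + 4 from by omega]
  exact le_trans step1 step2

lemma int_inv_shift {c : ℝ} (hc : 0 < c) :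
    IntegrableOn (fun t : ℝ => (t + c)⁻¹) (Ioc 0 1) ∧
      ∫ t in Ioc (0:ℝ) 1, (t + c)⁻¹ = Real.log (1 + c) - Real.log c := by
  have hii : IntervalIntegrable (fun t : ℝ => (t + c)⁻¹) volume 0 1 := by
    apply ContinuousOn.intervalIntegrable
    apply ContinuousOn.inv₀
    · fun_prop
    · intro x hx
      rw [Set.uIcc_of_le (by norm_num : (0:ℝ) ≤ 1)] at hx
      have := hx.1
      positivity
  constructor
  · exact (intervalIntegrable_iff_integrableOn_Ioc_of_le (by norm_num)).mp hii
  · rw [← intervalIntegral.integral_of_le (by norm_num : (0:ℝ) ≤ 1)]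
    rw [show (fun t : ℝ => (t + c)⁻¹) = (fun t : ℝ => (fun x : ℝ => x⁻¹) (t + c)) from rfl]
    rw [intervalIntegral.integral_comp_add_right (fun x : ℝ => x⁻¹) c]
    rw [integral_inv (by
      rw [Set.uIcc_of_le (by linarith : (0:ℝ) + c ≤ 1 + c)]
      intro h
      have := h.1
      linarith)]
    rw [zero_add, Real.log_div (by linarith) (by linarith)]

lemma int_pow_exp (k : ℕ) :
    IntegrableOn (fun t : ℝ => t ^ k * Real.exp (-t)) (Ioi 0) ∧
      ∫ t in Ioi (0:ℝ), t ^ k * Real.exp (-t) = Real.Gamma ((k:ℝ) + 1) := by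
  have hfun : (fun x : ℝ => Real.exp (-x) * x ^ ((k:ℝ) + 1 - 1)) =
      fun t : ℝ => t ^ k * Real.exp (-t) := by
    funext x
    rw [show (k:ℝ) + 1 - 1 = (k:ℝ) by ring, Real.rpow_natCast]
    ring
  have hpos : (0:ℝ) < (k:ℝ) + 1 := by positivity
  constructor
  · have := Real.GammaIntegral_convergent hpos
    rwa [hfun] at this
  · rw [Real.Gamma_eq_integral hpos, hfun]

set_option maxHeartbeats 1000000 in
theorem stmt11 (n : ℕ) (hn : 3 ≤ n) (s : ℝ) (hs : s = ((n : ℝ) - 1) / 2) :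
    ∃ c : ℝ, ∀ x y : EuclideanSpace ℝ (Fin n),
      x ∈ Metric.sphere (0 : EuclideanSpace ℝ (Fin n)) 1 →
      y ∈ Metric.sphere (0 : EuclideanSpace ℝ (Fin n)) 1 → x ≠ y →
      |(4 / ((n : ℝ) - 2)) ^ (s - 1/2) * (Real.Gamma (s + 1/2) / Real.Gamma (2 * s)) *
          ∫ t in Set.Ioi (0 : ℝ),
            Real.exp (-(t * ((n : ℝ) - 2) / 2)) *
              (spherePoissonKernel n (Real.exp (-t)) (inner ℝ x y : ℝ) - 1 / omegaSphere n) *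
              besselI (s - 1/2) (((n : ℝ) - 2) * t / 2) * t ^ (s - 1/2)| ≤
        c * Real.log (1 + (1 - (inner ℝ x y : ℝ)) ^ (-(n : ℝ) / 2)) := by
  subst hs
  rw [show (((n:ℝ) - 1) / 2 - 1/2 : ℝ) = ((n:ℝ) - 2)/2 from by ring]
  have hn2 : (2:ℝ) < (n:ℝ) := by exact_mod_cast (by omega : 2 < n)
  set a : ℝ := ((n:ℝ) - 2) / 2 with ha_def
  have ha0 : 0 < a := by rw [ha_def]; linarith
  have hω : 0 < omegaSphere n := omega_pos (by omega)
  have hΓa : 0 < Real.Gamma (a+1) := Real.Gamma_pos_of_pos (by linarith)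
  have hra : 0 < (a/2) ^ a := Real.rpow_pos_of_pos (by linarith) a
  set C₁ : ℝ := (a/2) ^ a / Real.Gamma (a+1) with hC₁
  have hC₁0 : 0 < C₁ := by rw [hC₁]; positivity
  set C₂ : ℝ := 2 ^ n * (1 + 3 * 2 ^ n) / omegaSphere n with hC₂
  have hC₂0 : 0 < C₂ := by rw [hC₂]; positivity
  have hs2 : (0:ℝ) < Real.sqrt 2 := Real.sqrt_pos.mpr (by norm_num)
  set α : ℝ := C₁ * 2 ^ (n+1) * Real.sqrt 2 / omegaSphere n with hα
  have hα0 : 0 < α := by rw [hα]; positivity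
  set β : ℝ := C₁ / omegaSphere n with hβ
  have hβ0 : 0 < β := by rw [hβ]; positivity
  have hΓn : 0 < Real.Gamma ((n:ℝ) - 1) := Real.Gamma_pos_of_pos (by linarith)
  set γ : ℝ := C₁ * C₂ * Real.Gamma ((n:ℝ) - 1) with hγ
  have hγ0 : 0 < γ := by rw [hγ]; positivity
  set K : ℝ := (4 / ((n : ℝ) - 2)) ^ a *
    (Real.Gamma (((n:ℝ) - 1)/2 + 1/2) / Real.Gamma (2 * (((n:ℝ) - 1)/2))) with hK
  have hK0 : 0 ≤ K := by
    rw [hK]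
    have h1 : 0 ≤ (4 / ((n : ℝ) - 2)) ^ a :=
      Real.rpow_nonneg (div_nonneg (by norm_num) (by linarith)) a
    have h2 : 0 < Real.Gamma (((n:ℝ) - 1)/2 + 1/2) := Real.Gamma_pos_of_pos (by linarith)
    have h3 : 0 < Real.Gamma (2 * (((n:ℝ) - 1)/2)) := Real.Gamma_pos_of_pos (by linarith)
    positivity
  set L₀ : ℝ := Real.log (1 + (2:ℝ) ^ (-(n:ℝ)/2)) with hL₀
  have hL₀0 : 0 < L₀ := by
    rw [hL₀]
    apply Real.log_pos
    have : (0:ℝ) < (2:ℝ) ^ (-(n:ℝ)/2) := Real.rpow_pos_of_pos (by norm_num) _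
    linarith
  clear_value a C₁ C₂ α β γ K L₀
  refine ⟨K * (α * (1 + Real.log 2 / L₀) + (β + γ) / L₀), ?_⟩
  intro x y hx hy hxy
  set τ : ℝ := (inner ℝ x y : ℝ) with hτdef
  have hxn : ‖x‖ = 1 := by simpa using mem_sphere_zero_iff_norm.mp hx
  have hyn : ‖y‖ = 1 := by simpa using mem_sphere_zero_iff_norm.mp hy
  have hτabs : |τ| ≤ 1 := by
    have h := abs_real_inner_le_norm x y
    rw [hxn, hyn] at h
    simpa [hτdef] using h
  have hτl : -1 ≤ τ := (abs_le.mp hτabs).1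
  have hτu : τ < 1 := by
    have h1 : (0:ℝ) < ‖x - y‖ := by
      rw [norm_sub_pos_iff]; exact hxy
    have h2 : ‖x - y‖^2 = ‖x‖^2 - 2 * (inner ℝ x y : ℝ) + ‖y‖^2 := norm_sub_sq_real x y
    rw [hxn, hyn] at h2
    have h3 : 0 < ‖x - y‖^2 := by positivity
    rw [h2] at h3
    rw [hτdef]
    linarith
  clear_value τ
  clear hx hy hxy hxn hyn
  set u : ℝ := 1 - τ with hu
  have hu0 : 0 < u := by rw [hu]; linarith
  have hu2 : u ≤ 2 := by rw [hu]; linarith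
  clear_value u
  have hsu : 0 < Real.sqrt u := Real.sqrt_pos.mpr hu0
  have hnn : -(n:ℝ)/2 ≤ 0 := by
    have : (0:ℝ) ≤ (n:ℝ) := n.cast_nonneg
    linarith
  set L : ℝ := Real.log (1 + u ^ (-(n:ℝ)/2)) with hL
  clear_value L
  have hupow : (0:ℝ) < u ^ (-(n:ℝ)/2) := Real.rpow_pos_of_pos hu0 _
  have hLL₀ : L₀ ≤ L := by
    rw [hL, hL₀]
    apply (Real.log_le_log_iff (by positivity) (by linarith)).mpr
    have h := Real.rpow_le_rpow_of_nonpos hu0 hu2 hnn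
    linarith
  have hL0 : 0 < L := lt_of_lt_of_le hL₀0 hLL₀
  -- the dominating function
  set g : ℝ → ℝ := fun t =>
    Set.indicator (Ioc (0:ℝ) 1) (fun t => α * (t + Real.sqrt u)⁻¹ + β) t
      + C₁ * C₂ * (t ^ (n - 2 : ℕ) * Real.exp (-t)) with hg
  clear_value g
  -- pointwise bound
  have hpt : ∀ t ∈ Ioi (0:ℝ),
      |Real.exp (-(t * ((n : ℝ) - 2) / 2)) *
        (spherePoissonKernel n (Real.exp (-t)) τ - 1 / omegaSphere n) *
        besselI a (((n : ℝ) - 2) * t / 2) * t ^ a| ≤ g t := by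
    intro t ht
    rw [mem_Ioi] at ht
    have hz0 : (0:ℝ) < ((n:ℝ) - 2) * t / 2 := by nlinarith
    have hbI : 0 ≤ besselI a (((n:ℝ) - 2) * t / 2) := besselI_nonneg ha0.le hz0
    have htpa : 0 ≤ t ^ a := Real.rpow_nonneg ht.le a
    have hE : 0 < Real.exp (-(t * ((n:ℝ) - 2) / 2)) := Real.exp_pos _
    set P : ℝ := spherePoissonKernel n (Real.exp (-t)) τ with hP
    clear_value P
    have habsF : |Real.exp (-(t * ((n : ℝ) - 2) / 2)) * (P - 1 / omegaSphere n) *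
          besselI a (((n : ℝ) - 2) * t / 2) * t ^ a|
        = |P - 1 / omegaSphere n| *
          (Real.exp (-(t * ((n : ℝ) - 2) / 2)) * besselI a (((n : ℝ) - 2) * t / 2) * t ^ a) := by
      rw [abs_mul, abs_mul, abs_mul, abs_of_pos hE, abs_of_nonneg hbI, abs_of_nonneg htpa]
      ring
    have hkey : Real.exp (-(t * ((n:ℝ) - 2) / 2)) * besselI a (((n:ℝ) - 2) * t / 2) * t ^ a
        ≤ C₁ * t ^ (n - 2 : ℕ) := by
      have h1 : besselI a (((n:ℝ) - 2) * t / 2)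
          ≤ ((((n:ℝ) - 2) * t / 2)/2) ^ a * Real.exp (((n:ℝ) - 2) * t / 2) / Real.Gamma (a+1) :=
        besselI_le ha0.le hz0
      have e1 : Real.exp (-(t * ((n:ℝ) - 2) / 2)) * Real.exp (((n:ℝ) - 2) * t / 2) = 1 := by
        rw [← Real.exp_add, show -(t * ((n:ℝ) - 2) / 2) + ((n:ℝ) - 2) * t / 2 = 0 by ring,
          Real.exp_zero]
      have e2 : ((((n:ℝ) - 2) * t / 2)/2) ^ a * t ^ a = (a/2) ^ a * t ^ (n - 2 : ℕ) := by
        rw [← Real.mul_rpow (by nlinarith) ht.le]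
        rw [show (((n:ℝ) - 2) * t / 2)/2 * t = a/2 * t^2 by rw [ha_def]; ring]
        rw [Real.mul_rpow (by linarith) (by positivity)]
        congr 1
        rw [← Real.rpow_natCast t 2, ← Real.rpow_mul ht.le,
          show ((2:ℕ):ℝ) * a = ((n - 2 : ℕ):ℝ) by
            rw [ha_def, Nat.cast_sub (by omega : 2 ≤ n)]; push_cast; ring,
          Real.rpow_natCast]
      calc Real.exp (-(t * ((n:ℝ) - 2) / 2)) * besselI a (((n:ℝ) - 2) * t / 2) * t ^ a
          ≤ Real.exp (-(t * ((n:ℝ) - 2) / 2)) *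
            (((((n:ℝ) - 2) * t / 2)/2) ^ a * Real.exp (((n:ℝ) - 2) * t / 2) / Real.Gamma (a+1))
              * t ^ a := by
            apply mul_le_mul_of_nonneg_right (mul_le_mul_of_nonneg_left h1 hE.le) htpa
        _ = (Real.exp (-(t * ((n:ℝ) - 2) / 2)) * Real.exp (((n:ℝ) - 2) * t / 2)) *
            (((((n:ℝ) - 2) * t / 2)/2) ^ a * t ^ a) / Real.Gamma (a+1) := by ring
        _ = C₁ * t ^ (n - 2 : ℕ) := by rw [e1, e2, one_mul, hC₁]; ring
    rw [habsF]
    have hstep : |P - 1 / omegaSphere n| *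
        (Real.exp (-(t * ((n : ℝ) - 2) / 2)) * besselI a (((n : ℝ) - 2) * t / 2) * t ^ a)
        ≤ |P - 1 / omegaSphere n| * (C₁ * t ^ (n - 2 : ℕ)) :=
      mul_le_mul_of_nonneg_left hkey (abs_nonneg _)
    have hexp0 : 0 ≤ C₁ * C₂ * (t ^ (n - 2 : ℕ) * Real.exp (-t)) := by positivity
    rcases le_or_gt t 1 with ht1 | ht1
    · -- small t
      have hmem : t ∈ Ioc (0:ℝ) 1 := ⟨ht, ht1⟩
      have hr0 : 0 < Real.exp (-t) := Real.exp_pos _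
      have hr1 : Real.exp (-t) < 1 := Real.exp_lt_one_iff.mpr (by linarith)
      have hd0 : 0 < 1 - 2 * Real.exp (-t) * τ + Real.exp (-t) ^ 2 := by nlinarith
      have hP0 : 0 ≤ P := by
        rw [hP, spherePoissonKernel]
        have h2 : 0 < (1 - 2 * Real.exp (-t) * τ + Real.exp (-t) ^ 2) ^ ((n:ℝ)/2) :=
          Real.rpow_pos_of_pos hd0 _
        have h3 : 0 ≤ 1 - Real.exp (-t) ^ 2 := by nlinarith
        positivity
      have hω' : 0 < 1 / omegaSphere n := by positivity
      have habs2 : |P - 1 / omegaSphere n| ≤ P + 1 / omegaSphere n := by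
        rw [abs_le]; constructor <;> linarith
      have hnear := poisson_near hn ht ht1 hτl hτu
      rw [← hu, ← hP] at hnear
      have htp1 : t ^ (n - 2 : ℕ) ≤ 1 := pow_le_one₀ ht.le ht1
      have htpnn : (0:ℝ) ≤ t ^ (n - 2 : ℕ) := pow_nonneg ht.le _
      have hb : |P - 1 / omegaSphere n| * (C₁ * t ^ (n - 2 : ℕ))
          ≤ α * (t + Real.sqrt u)⁻¹ + β := by
        have h6 : t ^ (n - 2 : ℕ) * (1 / omegaSphere n) ≤ 1 / omegaSphere n :=
          mul_le_of_le_one_left hω'.le htp1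
        have h7 : t ^ (n - 2 : ℕ) * |P - 1 / omegaSphere n|
            ≤ 2 ^ (n+1) * Real.sqrt 2 / (omegaSphere n * (t + Real.sqrt u))
              + 1 / omegaSphere n := by
          have h10 := mul_le_mul_of_nonneg_left habs2 htpnn
          have h9 : t ^ (n - 2 : ℕ) * (P + 1 / omegaSphere n)
              = t ^ (n - 2 : ℕ) * P + t ^ (n - 2 : ℕ) * (1 / omegaSphere n) := by ring
          rw [h9] at h10
          linarith [hnear, h6, h10]
        calc |P - 1 / omegaSphere n| * (C₁ * t ^ (n - 2 : ℕ))
            = C₁ * (t ^ (n - 2 : ℕ) * |P - 1 / omegaSphere n|) := by ring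
          _ ≤ C₁ * (2 ^ (n+1) * Real.sqrt 2 / (omegaSphere n * (t + Real.sqrt u))
              + 1 / omegaSphere n) := mul_le_mul_of_nonneg_left h7 hC₁0.le
          _ = α * (t + Real.sqrt u)⁻¹ + β := by
              rw [hα, hβ]
              have hA : 0 < t + Real.sqrt u := by positivity
              field_simp
      have hg_eval : g t = (α * (t + Real.sqrt u)⁻¹ + β)
          + C₁ * C₂ * (t ^ (n - 2 : ℕ) * Real.exp (-t)) := by
        rw [hg]
        simp only [Set.indicator_of_mem hmem]
      rw [hg_eval]
      linarith
    · -- large t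
      have hr0 : 0 < Real.exp (-t) := Real.exp_pos _
      have hrle : Real.exp (-t) ≤ 1/2 := by
        have h1 : Real.exp (-t) ≤ Real.exp (-1) := Real.exp_le_exp.mpr (by linarith)
        have h2 : (2:ℝ) ≤ Real.exp 1 := le_trans (by norm_num) Real.exp_one_gt_d9.le
        have h3 : Real.exp (-1) ≤ 1/2 := by
          rw [Real.exp_neg]
          have := inv_anti₀ (by norm_num : (0:ℝ) < 2) h2
          linarith
        linarith
      have hfar := poisson_far hn hr0 hrle hτabs
      rw [← hC₂, ← hP] at hfar
      have hg_eval : g t = C₁ * C₂ * (t ^ (n - 2 : ℕ) * Real.exp (-t)) := by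
        rw [hg]
        have hnm : t ∉ Ioc (0:ℝ) 1 := fun hmem => absurd hmem.2 (not_le.mpr ht1)
        simp only [Set.indicator_of_notMem hnm]
        ring
      rw [hg_eval]
      have htpnn : (0:ℝ) ≤ t ^ (n - 2 : ℕ) := pow_nonneg ht.le _
      have h8 : |P - 1 / omegaSphere n| * (C₁ * t ^ (n - 2 : ℕ))
          ≤ (C₂ * Real.exp (-t)) * (C₁ * t ^ (n - 2 : ℕ)) :=
        mul_le_mul_of_nonneg_right hfar (by positivity)
      exact le_trans hstep (le_trans h8 (le_of_eq (by ring)))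
  -- integrability of g
  have hg₁int : IntegrableOn (fun t : ℝ => α * (t + Real.sqrt u)⁻¹ + β) (Ioc 0 1) := by
    apply Integrable.add
    · exact (int_inv_shift hsu).1.const_mul α
    · apply (integrableOn_const_iff (C := β)).mpr
      right
      rw [Real.volume_Ioc]
      exact ENNReal.ofReal_lt_top
  have hindint : Integrable
      (Set.indicator (Ioc (0:ℝ) 1) (fun t => α * (t + Real.sqrt u)⁻¹ + β))
      (volume.restrict (Ioi 0)) :=
    (hg₁int.integrable_indicator measurableSet_Ioc).restrict
  have hg₂int : Integrable (fun t : ℝ => C₁ * C₂ * (t ^ (n - 2 : ℕ) * Real.exp (-t)))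
      (volume.restrict (Ioi 0)) := (int_pow_exp (n-2)).1.const_mul _
  have hgint : Integrable g (volume.restrict (Ioi 0)) := by
    rw [hg]; exact hindint.add hg₂int
  -- value of the integral of g
  have hval : (∫ t in Ioi (0:ℝ), g t)
      = α * (Real.log (1 + Real.sqrt u) - Real.log (Real.sqrt u)) + β + γ := by
    rw [hg, integral_add hindint hg₂int]
    have hpart1 : (∫ t in Ioi (0:ℝ),
        Set.indicator (Ioc (0:ℝ) 1) (fun t => α * (t + Real.sqrt u)⁻¹ + β) t)
        = α * (Real.log (1 + Real.sqrt u) - Real.log (Real.sqrt u)) + β := by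
      rw [integral_indicator measurableSet_Ioc, Measure.restrict_restrict measurableSet_Ioc,
        Set.inter_eq_self_of_subset_left Set.Ioc_subset_Ioi_self]
      rw [integral_add ((int_inv_shift hsu).1.const_mul α) ((integrableOn_const_iff (C := β)).mpr
        (Or.inr (by rw [Real.volume_Ioc]; exact ENNReal.ofReal_lt_top)))]
      rw [integral_const_mul, (int_inv_shift hsu).2, setIntegral_const]
      rw [Real.volume_real_Ioc]
      norm_num
    have hpart2 : (∫ t in Ioi (0:ℝ), C₁ * C₂ * (t ^ (n - 2 : ℕ) * Real.exp (-t))) = γ := by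
      rw [integral_const_mul, (int_pow_exp (n-2)).2, hγ]
      rw [show ((n - 2 : ℕ):ℝ) + 1 = (n:ℝ) - 1 by
        rw [Nat.cast_sub (by omega : 2 ≤ n)]; push_cast; ring]
    rw [hpart1, hpart2]
  -- bound the integral
  have habs_int : |∫ t in Ioi (0:ℝ),
      Real.exp (-(t * ((n : ℝ) - 2) / 2)) *
        (spherePoissonKernel n (Real.exp (-t)) τ - 1 / omegaSphere n) *
        besselI a (((n : ℝ) - 2) * t / 2) * t ^ a| ≤ ∫ t in Ioi (0:ℝ), g t := by
    have h1 := norm_integral_le_integral_norm (μ := volume.restrict (Ioi 0))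
      (f := fun t : ℝ => Real.exp (-(t * ((n : ℝ) - 2) / 2)) *
        (spherePoissonKernel n (Real.exp (-t)) τ - 1 / omegaSphere n) *
        besselI a (((n : ℝ) - 2) * t / 2) * t ^ a)
    rw [Real.norm_eq_abs] at h1
    refine le_trans h1 ?_
    apply integral_mono_of_nonneg (ae_of_all _ fun t => norm_nonneg _) hgint
    apply (ae_restrict_iff' measurableSet_Ioi).mpr
    apply ae_of_all
    intro t ht
    simp only [Real.norm_eq_abs]
    exact hpt t ht
  -- the log comparison
  have hlogeq : Real.log (1 + Real.sqrt u) - Real.log (Real.sqrt u)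
      = Real.log (1 + (Real.sqrt u)⁻¹) := by
    rw [← Real.log_div (by positivity) (ne_of_gt hsu)]
    congr 1
    field_simp
    ring
  have hlog : Real.log (1 + (Real.sqrt u)⁻¹) ≤ L + Real.log 2 / L₀ * L := by
    have hlog2nn : (0:ℝ) ≤ Real.log 2 := Real.log_nonneg (by norm_num)
    rcases le_total u 1 with h | h
    · have e2 : (Real.sqrt u)⁻¹ = u ^ (-(1:ℝ)/2) := by
        rw [show -(1:ℝ)/2 = -(1/2 : ℝ) by ring, Real.rpow_neg hu0.le, Real.sqrt_eq_rpow]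
      have h1 : (Real.sqrt u)⁻¹ ≤ u ^ (-(n:ℝ)/2) := by
        rw [e2]
        exact Real.rpow_le_rpow_of_exponent_ge hu0 h (by linarith)
      have h2 : Real.log (1 + (Real.sqrt u)⁻¹) ≤ L := by
        rw [hL]
        exact (Real.log_le_log_iff (by positivity) (by linarith)).mpr (by linarith)
      have h3 : 0 ≤ Real.log 2 / L₀ * L :=
        mul_nonneg (div_nonneg hlog2nn hL₀0.le) hL0.le
      linarith
    · have h1 : (Real.sqrt u)⁻¹ ≤ 1 := by
        apply inv_le_one_of_one_le₀
        rw [show (1:ℝ) = Real.sqrt 1 by simp]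
        exact Real.sqrt_le_sqrt h
      have h2 : Real.log (1 + (Real.sqrt u)⁻¹) ≤ Real.log 2 := by
        apply (Real.log_le_log_iff (by positivity) (by norm_num)).mpr
        linarith
      have h3 : Real.log 2 ≤ Real.log 2 / L₀ * L := by
        rw [div_mul_eq_mul_div, le_div_iff₀ hL₀0]
        nlinarith [mul_le_mul_of_nonneg_left hLL₀ hlog2nn]
      linarith [hL0.le]
  have hβγ : β + γ ≤ (β + γ) / L₀ * L := by
    rw [div_mul_eq_mul_div, le_div_iff₀ hL₀0]
    nlinarith [mul_le_mul_of_nonneg_left hLL₀ (show (0:ℝ) ≤ β + γ by linarith)]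
  -- final chain
  rw [abs_mul, abs_of_nonneg hK0]
  calc K * |∫ t in Ioi (0:ℝ),
      Real.exp (-(t * ((n : ℝ) - 2) / 2)) *
        (spherePoissonKernel n (Real.exp (-t)) τ - 1 / omegaSphere n) *
        besselI a (((n : ℝ) - 2) * t / 2) * t ^ a|
      ≤ K * ∫ t in Ioi (0:ℝ), g t := mul_le_mul_of_nonneg_left habs_int hK0
    _ = K * (α * Real.log (1 + (Real.sqrt u)⁻¹) + β + γ) := by rw [hval, hlogeq]
    _ ≤ K * (α * (L + Real.log 2 / L₀ * L) + (β + γ) / L₀ * L) := by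
        apply mul_le_mul_of_nonneg_left _ hK0
        have := mul_le_mul_of_nonneg_left hlog hα0.le
        linarith
    _ = K * (α * (1 + Real.log 2 / L₀) + (β + γ) / L₀) * L := by ring
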